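/- arXiv:2308.16363 — 2 statements merged into one kernel-verified Lean document; each statement's English description precedes it below -/
import Mathlib

section
/- In a CD neighborhood graph with degout(v) ≥ 1 and degin(v) + n_K ≥ 1 in which every J-type vertex cites all of v's out-neighbors (i.e. degout(j) = degout(v) + 1 for every j ∈ J), the normalized betweenness equals the proportion of I-type vertices and exceeds the CD Index by exactly the proportion of J-type vertices: B(v)/(degout(v)·(degin(v) + n_K)) = n_I/(degin(v) + n_K), and B(v)/(degout(v)·(degin(v) + n_K)) − (n_I − n_J)/(n_I + n_J + n_K) = n_J/(degin(v) + n_K). -/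
open Finset

variable {V : Type*}

/-- `l` is a directed path from `s` to `t` in the directed graph with adjacency
relation `adj`: consecutive vertices are joined by edges, it starts at `s`,
ends at `t`, and has no repeated vertices. -/
def IsDirPath (adj : V → V → Prop) (s t : V) (l : List V) : Prop :=
  l.Chain' adj ∧ l.head? = some s ∧ l.getLast? = some t ∧ l.Nodup

/-- `l` is a shortest directed path from `s` to `t`. -/
def IsShortestDirPath (adj : V → V → Prop) (s t : V) (l : List V) : Prop :=
  IsDirPath adj s t l ∧ ∀ l', IsDirPath adj s t l' → l.length ≤ l'.length

/-- `x` occurs as an interior vertex of the list `l` (i.e. `x` is a member of `l`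
which is neither the first nor the last entry). -/
def ListInterior (l : List V) (x : V) : Prop := x ∈ l.tail.dropLast

/-- `σ(s,t)`: the number of shortest directed paths from `s` to `t`. -/
noncomputable def numShortest (adj : V → V → Prop) (s t : V) : ℕ :=
  {l : List V | IsShortestDirPath adj s t l}.ncard

/-- `σ(s,t∣x)`: the number of shortest directed paths from `s` to `t` that pass
through `x` as an interior vertex. -/
noncomputable def numShortestThrough (adj : V → V → Prop) (s t x : V) : ℕ :=
  {l : List V | IsShortestDirPath adj s t l ∧ ListInterior l x}.ncard

/-- A CD Index neighborhood graph: a directed graph whose vertex set is the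
disjoint union `{v} ∪ I ∪ J ∪ K ∪ T` of the focal vertex `v` and four pairwise
disjoint finite sets, with the edge structure of the CD Index neighborhood. -/
structure CDGraph (V : Type*) where
  /-- the adjacency relation: `adj u w` means there is a directed edge `u → w` -/
  adj : V → V → Prop
  /-- the focal vertex -/
  v : V
  /-- the set of `I`-type vertices -/
  I : Finset V
  /-- the set of `J`-type vertices -/
  J : Finset V
  /-- the set of `K`-type vertices -/
  K : Finset V
  /-- the set of vertices cited by `v` -/
  T : Finset V
  v_not_I : v ∉ I
  v_not_J : v ∉ J
  v_not_K : v ∉ K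
  v_not_T : v ∉ T
  disj_IJ : Disjoint I J
  disj_IK : Disjoint I K
  disj_IT : Disjoint I T
  disj_JK : Disjoint J K
  disj_JT : Disjoint J T
  disj_KT : Disjoint K T
  /-- every vertex is `v` or belongs to one of `I`, `J`, `K`, `T` -/
  cover : ∀ x : V, x = v ∨ x ∈ I ∨ x ∈ J ∨ x ∈ K ∨ x ∈ T
  /-- `v` has an out-edge to each element of `T` and no other out-edges -/
  v_out : ∀ w, adj v w ↔ w ∈ T
  /-- each `i ∈ I` has exactly one out-edge, namely to `v` -/
  I_out : ∀ i ∈ I, ∀ w, adj i w ↔ w = v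
  /-- each `j ∈ J` has an out-edge to `v` -/
  J_cites_v : ∀ j ∈ J, adj j v
  /-- each `j ∈ J` has at least one out-edge into `T` -/
  J_cites_T : ∀ j ∈ J, ∃ t ∈ T, adj j t
  /-- every out-edge of `j ∈ J` goes to `{v} ∪ T` -/
  J_out : ∀ j ∈ J, ∀ w, adj j w → w = v ∨ w ∈ T
  /-- each `k ∈ K` has at least one out-edge -/
  K_cites : ∀ k ∈ K, ∃ w, adj k w
  /-- every out-edge of `k ∈ K` goes into `T` -/
  K_out : ∀ k ∈ K, ∀ w, adj k w → w ∈ T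
  /-- vertices in `T` have no out-edges -/
  T_out : ∀ t ∈ T, ∀ w, ¬ adj t w

/-- The out-degree of a vertex `u`: the number of out-neighbors of `u`. -/
noncomputable def CDGraph.degout (G : CDGraph V) (u : V) : ℕ :=
  {w | G.adj u w}.ncard

/-- The in-degree of the focal vertex `v`, namely `n_I + n_J`. -/
def CDGraph.degin (G : CDGraph V) : ℕ := G.I.card + G.J.card

/-- The raw betweenness of the focal vertex `v`:
`B(v) = Σ_{s ≠ v} Σ_{t ≠ v} σ(s,t∣v)/σ(s,t)`, where terms with `σ(s,t) = 0`
count as `0` (division by zero in `ℝ` yields `0`). -/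
noncomputable def CDGraph.B [Fintype V] [DecidableEq V] (G : CDGraph V) : ℝ :=
  ∑ s ∈ univ.erase G.v, ∑ t ∈ univ.erase G.v,
    (numShortestThrough G.adj s t G.v : ℝ) / (numShortest G.adj s t : ℝ)

section Aux

lemma CDGraph.degout_v_eq (G : CDGraph V) : G.degout G.v = G.T.card := by
  have h : {w | G.adj G.v w} = ↑G.T := by
    ext w; simp [G.v_out w]
  rw [CDGraph.degout, h, Set.ncard_coe_finset]

lemma CDGraph.J_all [Fintype V] [DecidableEq V] (G : CDGraph V)
    (hJfull : ∀ j ∈ G.J, G.degout j = G.degout G.v + 1)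
    {j : V} (hj : j ∈ G.J) {t : V} (ht : t ∈ G.T) : G.adj j t := by
  have hsub : {w | G.adj j w} ⊆ ↑(insert G.v G.T) := by
    intro w hw
    rcases G.J_out j hj w hw with rfl | hwT
    · simp
    · simp [hwT]
  have hcard : (↑(insert G.v G.T) : Set V).ncard ≤ {w | G.adj j w}.ncard := by
    rw [Set.ncard_coe_finset, Finset.card_insert_of_notMem G.v_not_T]
    have h := hJfull j hj
    rw [CDGraph.degout_v_eq] at h
    rw [show {w | G.adj j w}.ncard = G.degout j from rfl, h]
  have heq := Set.eq_of_subset_of_ncard_le hsub hcard (Set.toFinite _)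
  have : t ∈ {w | G.adj j w} := by rw [heq]; simp [ht]
  exact this

/-- Classification of directed paths with `v` as interior vertex. -/
lemma CDGraph.interior_path (G : CDGraph V) {s t : V} {l : List V}
    (hs : s ≠ G.v) (hl : IsDirPath G.adj s t l) (hv : ListInterior l G.v) :
    (s ∈ G.I ∨ s ∈ G.J) ∧ t ∈ G.T ∧ l = [s, G.v, t] := by
  obtain ⟨hc, hh, hlast, hnd⟩ := hl
  rcases l with _ | ⟨a, _ | ⟨b, _ | ⟨c, r⟩⟩⟩
  · simp [ListInterior] at hv
  · simp [ListInterior] at hv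
  · simp [ListInterior] at hv
  · obtain rfl : s = a := by simpa using hh.symm
    unfold List.Chain' at hc; rw [List.isChain_cons_cons, List.isChain_cons_cons] at hc
    obtain ⟨h1, h2, hc⟩ := hc
    have hbody : b = G.v → (t ∈ G.T ∧ s :: b :: c :: r = [s, G.v, t]) := by
      rintro rfl
      have hcT : c ∈ G.T := (G.v_out c).mp h2
      rcases r with _ | ⟨d, r'⟩
      · obtain rfl : t = c := by
          have : c = t := by simpa using hlast
          exact this.symm
        exact ⟨hcT, rfl⟩
      · rw [List.isChain_cons_cons] at hc
        exact absurd hc.1 (G.T_out c hcT d)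
    rcases G.cover s with rfl | hI | hJ | hK | hT
    · exact absurd rfl hs
    · exact ⟨Or.inl hI, hbody ((G.I_out s hI b).mp h1)⟩
    · rcases G.J_out s hJ b h1 with hb | hbT
      · exact ⟨Or.inr hJ, hbody hb⟩
      · exact absurd h2 (G.T_out b hbT c)
    · exact absurd h2 (G.T_out b (G.K_out s hK b h1) c)
    · exact absurd h1 (G.T_out s hT b)

/-- For `s ∈ I`, `t ∈ T`, the unique directed path is `[s, v, t]`. -/
lemma CDGraph.I_path (G : CDGraph V) {s t : V} (hs : s ∈ G.I) (ht : t ∈ G.T)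
    {l : List V} : IsDirPath G.adj s t l ↔ l = [s, G.v, t] := by
  have hsv : s ≠ G.v := fun h => G.v_not_I (h ▸ hs)
  have hvt : G.v ≠ t := fun h => G.v_not_T (h ▸ ht)
  have hst : s ≠ t := fun h => Finset.disjoint_left.mp G.disj_IT hs (h ▸ ht)
  constructor
  · rintro ⟨hc, hh, hlast, hnd⟩
    rcases l with _ | ⟨a, _ | ⟨b, _ | ⟨c, r⟩⟩⟩
    · simp at hh
    · obtain rfl : s = a := by simpa using hh.symm
      have : s = t := by simpa using hlast
      exact absurd this hst
    · obtain rfl : s = a := by simpa using hh.symm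
      unfold List.Chain' at hc; rw [List.isChain_cons_cons] at hc
      have hb : b = G.v := (G.I_out s hs b).mp hc.1
      have hbt : b = t := by simpa using hlast
      exact absurd (hb.symm.trans hbt) hvt
    · obtain rfl : s = a := by simpa using hh.symm
      unfold List.Chain' at hc; rw [List.isChain_cons_cons, List.isChain_cons_cons] at hc
      obtain ⟨h1, h2, hc⟩ := hc
      obtain rfl : b = G.v := (G.I_out s hs b).mp h1
      have hcT : c ∈ G.T := (G.v_out c).mp h2
      rcases r with _ | ⟨d, r'⟩
      · obtain rfl : t = c := by
          have : c = t := by simpa using hlast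
          exact this.symm
        rfl
      · rw [List.isChain_cons_cons] at hc
        exact absurd hc.1 (G.T_out c hcT d)
  · rintro rfl
    refine ⟨?_, by simp, by simp, ?_⟩
    · simp only [List.Chain', List.isChain_cons_cons, List.isChain_singleton, and_true]
      exact ⟨(G.I_out s hs G.v).mpr rfl, (G.v_out t).mpr ht⟩
    · simp [hsv, hst, hvt]

lemma CDGraph.sigma_IT (G : CDGraph V) {s t : V} (hs : s ∈ G.I) (ht : t ∈ G.T) :
    numShortest G.adj s t = 1 ∧ numShortestThrough G.adj s t G.v = 1 := by
  have hset : {l : List V | IsShortestDirPath G.adj s t l} = {[s, G.v, t]} := by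
    ext l
    simp only [Set.mem_setOf_eq, Set.mem_singleton_iff]
    constructor
    · rintro ⟨hl, -⟩
      exact (G.I_path hs ht).mp hl
    · rintro rfl
      refine ⟨(G.I_path hs ht).mpr rfl, fun l' hl' => ?_⟩
      rw [(G.I_path hs ht).mp hl']
  have hint : ListInterior [s, G.v, t] G.v := by simp [ListInterior]
  have hshort : IsShortestDirPath G.adj s t [s, G.v, t] :=
    (Set.ext_iff.mp hset [s, G.v, t]).mpr rfl
  have hset2 : {l : List V | IsShortestDirPath G.adj s t l ∧ ListInterior l G.v}
      = {[s, G.v, t]} := by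
    ext l
    simp only [Set.mem_setOf_eq, Set.mem_singleton_iff]
    constructor
    · rintro ⟨hl, -⟩
      exact (Set.ext_iff.mp hset l).mp hl
    · rintro rfl
      exact ⟨hshort, hint⟩
  rw [numShortest, numShortestThrough, hset, hset2]
  simp

lemma CDGraph.through_zero [Fintype V] [DecidableEq V] (G : CDGraph V)
    (hJfull : ∀ j ∈ G.J, G.degout j = G.degout G.v + 1)
    {s t : V} (hs : s ≠ G.v) (h : ¬(s ∈ G.I ∧ t ∈ G.T)) :
    numShortestThrough G.adj s t G.v = 0 := by
  rw [numShortestThrough]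
  convert Set.ncard_empty (List V)
  rw [Set.eq_empty_iff_forall_notMem]
  rintro l ⟨⟨hl, hmin⟩, hint⟩
  obtain ⟨hIJ, htT, rfl⟩ := G.interior_path hs hl hint
  rcases hIJ with hI | hJ
  · exact h ⟨hI, htT⟩
  · have hadj : G.adj s t := G.J_all hJfull hJ htT
    have hst : s ≠ t := fun h => Finset.disjoint_left.mp G.disj_JT hJ (h ▸ htT)
    have hpath : IsDirPath G.adj s t [s, t] := by
      refine ⟨by simp [List.Chain', hadj], by simp, by simp, by simp [hst]⟩
    have := hmin [s, t] hpath
    simp at this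

lemma CDGraph.B_eq [Fintype V] [DecidableEq V] (G : CDGraph V)
    (hJfull : ∀ j ∈ G.J, G.degout j = G.degout G.v + 1) :
    G.B = (G.I.card : ℝ) * (G.T.card : ℝ) := by
  rw [CDGraph.B]
  have hterm : ∀ s ∈ univ.erase G.v, ∀ t ∈ univ.erase G.v,
      (numShortestThrough G.adj s t G.v : ℝ) / (numShortest G.adj s t : ℝ)
        = (if s ∈ G.I then (1:ℝ) else 0) * (if t ∈ G.T then (1:ℝ) else 0) := by
    intro s hsmem t htmem
    have hs : s ≠ G.v := (Finset.mem_erase.mp hsmem).1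
    by_cases hIT : s ∈ G.I ∧ t ∈ G.T
    · obtain ⟨h1, h2⟩ := G.sigma_IT hIT.1 hIT.2
      rw [h1, h2]
      simp [hIT.1, hIT.2]
    · rw [G.through_zero hJfull hs hIT]
      push_neg at hIT
      by_cases hsI : s ∈ G.I
      · simp [hsI, hIT hsI]
      · simp [hsI]
  rw [Finset.sum_congr rfl (fun s hsmem => Finset.sum_congr rfl (hterm s hsmem))]
  rw [← Finset.sum_mul_sum]
  have hI : ∑ s ∈ univ.erase G.v, (if s ∈ G.I then (1:ℝ) else 0) = G.I.card := by
    rw [← Finset.sum_filter]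
    have h : (univ.erase G.v).filter (· ∈ G.I) = G.I := by
      ext x
      rw [Finset.mem_filter, Finset.mem_erase]
      exact ⟨fun h => h.2, fun h => ⟨⟨fun he => G.v_not_I (he ▸ h), Finset.mem_univ x⟩, h⟩⟩
    rw [h]
    simp
  have hT : ∑ t ∈ univ.erase G.v, (if t ∈ G.T then (1:ℝ) else 0) = G.T.card := by
    rw [← Finset.sum_filter]
    have h : (univ.erase G.v).filter (· ∈ G.T) = G.T := by
      ext x
      rw [Finset.mem_filter, Finset.mem_erase]
      exact ⟨fun h => h.2, fun h => ⟨⟨fun he => G.v_not_T (he ▸ h), Finset.mem_univ x⟩, h⟩⟩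
    rw [h]
    simp
  rw [hI, hT]

end Aux

/-- In a CD neighborhood graph with `degout(v) ≥ 1` and
`degin(v) + n_K ≥ 1` in which every `J`-type vertex cites all of `v`'s
out-neighbors (i.e. `degout(j) = degout(v) + 1` for every `j ∈ J`), the normalized
betweenness equals the proportion of `I`-type vertices and exceeds the CD Index by
exactly the proportion of `J`-type vertices:
`B(v)/(degout(v)·(degin(v) + n_K)) = n_I/(degin(v) + n_K)`, and
`B(v)/(degout(v)·(degin(v) + n_K)) − (n_I − n_J)/(n_I + n_J + n_K)
  = n_J/(degin(v) + n_K)`. -/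
theorem cd_betweenness_full_J_citation [Fintype V] [DecidableEq V] (G : CDGraph V)
    (h1 : 1 ≤ G.degout G.v) (h2 : 1 ≤ G.degin + G.K.card)
    (hJfull : ∀ j ∈ G.J, G.degout j = G.degout G.v + 1) :
    G.B / ((G.degout G.v : ℝ) * ((G.degin : ℝ) + (G.K.card : ℝ)))
        = (G.I.card : ℝ) / ((G.degin : ℝ) + (G.K.card : ℝ)) ∧
    G.B / ((G.degout G.v : ℝ) * ((G.degin : ℝ) + (G.K.card : ℝ)))
        - ((G.I.card : ℝ) - (G.J.card : ℝ))
            / ((G.I.card : ℝ) + (G.J.card : ℝ) + (G.K.card : ℝ))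
      = (G.J.card : ℝ) / ((G.degin : ℝ) + (G.K.card : ℝ)) := by
  have hB := G.B_eq hJfull
  have hdeg : (G.degout G.v : ℝ) = (G.T.card : ℝ) := by
    rw [G.degout_v_eq]
  have hd : (0:ℝ) < (G.degout G.v : ℝ) := by exact_mod_cast h1
  have hdin : (G.degin : ℝ) = (G.I.card : ℝ) + (G.J.card : ℝ) := by
    rw [CDGraph.degin]; push_cast; ring
  have hm : (0:ℝ) < (G.degin : ℝ) + (G.K.card : ℝ) := by
    have : (0:ℕ) < G.degin + G.K.card := h2
    exact_mod_cast this
  have hfirst : G.B / ((G.degout G.v : ℝ) * ((G.degin : ℝ) + (G.K.card : ℝ)))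
      = (G.I.card : ℝ) / ((G.degin : ℝ) + (G.K.card : ℝ)) := by
    rw [hB, ← hdeg]
    field_simp
  refine ⟨hfirst, ?_⟩
  rw [hfirst, hdin]
  have hm' : (0:ℝ) < (G.I.card : ℝ) + (G.J.card : ℝ) + (G.K.card : ℝ) := by
    rw [← hdin] at *; linarith
  field_simp
  ring
end

section
/- In a CD neighborhood graph with degout(v) ≥ 1 and degin(v) ≥ 1, if the normalized betweenness attains its maximal value, B(v)/(degout(v)·(degin(v) + n_K)) = 1, then K = ∅ and J = ∅, and consequently the CD Index also attains its maximal value: D(v) = (n_I − n_J)/(n_I + n_J + n_K) = 1. -/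
open Finset

variable {V : Type*}

namespace CDGraph

variable [DecidableEq V] (G : CDGraph V)

lemma adj_target {s x : V} (hs : s ≠ G.v) (h : G.adj s x) : x = G.v ∨ x ∈ G.T := by
  rcases G.cover s with rfl | hI | hJ | hK | hT
  · exact absurd rfl hs
  · exact Or.inl ((G.I_out s hI x).mp h)
  · exact G.J_out s hJ x h
  · exact Or.inr (G.K_out s hK x h)
  · exact absurd h (G.T_out s hT x)

lemma dirPath_cases {s t : V} {l : List V} (hs : s ≠ G.v)
    (h : IsDirPath G.adj s t l) :
    (l = [s] ∧ s = t) ∨ (l = [s, t] ∧ G.adj s t) ∨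
      (l = [s, G.v, t] ∧ G.adj s G.v ∧ G.adj G.v t) := by
  obtain ⟨hc, hh, hl, -⟩ := h
  rcases l with - | ⟨a, - | ⟨b, - | ⟨c, r⟩⟩⟩
  · simp at hh
  · obtain rfl : a = s := by simpa using hh
    obtain rfl : a = t := by simpa using hl
    exact Or.inl ⟨rfl, rfl⟩
  · obtain rfl : a = s := by simpa using hh
    obtain rfl : b = t := by simpa using hl
    exact Or.inr (Or.inl ⟨rfl, by simpa [List.Chain', List.isChain_pair] using hc⟩)
  · obtain rfl : a = s := by simpa using hh
    rw [List.Chain', List.isChain_cons_cons] at hc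
    obtain ⟨hsb, hc⟩ := hc
    rcases G.adj_target hs hsb with rfl | hbT
    · rw [List.isChain_cons_cons] at hc
      obtain ⟨hvc, hc⟩ := hc
      have hcT : c ∈ G.T := (G.v_out c).mp hvc
      rcases r with - | ⟨d, r'⟩
      · obtain rfl : c = t := by simpa using hl
        exact Or.inr (Or.inr ⟨rfl, hsb, hvc⟩)
      · rw [List.isChain_cons_cons] at hc
        exact absurd hc.1 (G.T_out c hcT d)
    · rw [List.isChain_cons_cons] at hc
      exact absurd hc.1 (G.T_out b hbT c)

lemma isDirPath_svt {s t : V} (hsv : G.adj s G.v) (ht : t ∈ G.T) (hst : s ≠ t) :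
    IsDirPath G.adj s t [s, G.v, t] := by
  have hsne : s ≠ G.v := by
    rintro rfl
    exact G.v_not_T ((G.v_out G.v).mp hsv)
  have hvt : G.v ≠ t := fun h => G.v_not_T (h ▸ ht)
  refine ⟨?_, rfl, by simp, ?_⟩
  · simp [List.Chain', List.isChain_cons_cons, hsv, (G.v_out t).mpr ht]
  · simp [hsne, hst, hvt]


lemma adj_sv {s : V} (hsIJ : s ∈ G.I ∪ G.J) : G.adj s G.v := by
  rcases Finset.mem_union.mp hsIJ with hI | hJ
  · exact (G.I_out s hI G.v).mpr rfl
  · exact G.J_cites_v s hJ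

lemma IJ_ne_v {s : V} (hsIJ : s ∈ G.I ∪ G.J) : s ≠ G.v := by
  rintro rfl
  rcases Finset.mem_union.mp hsIJ with hI | hJ
  · exact G.v_not_I hI
  · exact G.v_not_J hJ

lemma IJ_ne_T {s t : V} (hsIJ : s ∈ G.I ∪ G.J) (ht : t ∈ G.T) : s ≠ t := by
  rintro rfl
  rcases Finset.mem_union.mp hsIJ with hI | hJ
  · exact (Finset.disjoint_left.mp G.disj_IT hI) ht
  · exact (Finset.disjoint_left.mp G.disj_JT hJ) ht

lemma shortest_pos {s t : V} (hsIJ : s ∈ G.I ∪ G.J) (ht : t ∈ G.T) (hnadj : ¬ G.adj s t) :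
    {l : List V | IsShortestDirPath G.adj s t l} = {[s, G.v, t]} := by
  have hs : s ≠ G.v := G.IJ_ne_v hsIJ
  have hst : s ≠ t := G.IJ_ne_T hsIJ ht
  have hpaths : ∀ l : List V, IsDirPath G.adj s t l → l = [s, G.v, t] := by
    intro l hl
    rcases G.dirPath_cases hs hl with ⟨-, rfl⟩ | ⟨-, hadj⟩ | ⟨rfl, -, -⟩
    · exact absurd rfl hst
    · exact absurd hadj hnadj
    · rfl
  have hpath : IsDirPath G.adj s t [s, G.v, t] := G.isDirPath_svt (G.adj_sv hsIJ) ht hst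
  ext l
  simp only [Set.mem_setOf_eq, Set.mem_singleton_iff]
  constructor
  · exact fun h => hpaths l h.1
  · rintro rfl
    exact ⟨hpath, fun l' hl' => by rw [hpaths l' hl']⟩

lemma term_pos {s t : V} (hsIJ : s ∈ G.I ∪ G.J) (ht : t ∈ G.T) (hnadj : ¬ G.adj s t) :
    numShortest G.adj s t = 1 ∧ numShortestThrough G.adj s t G.v = 1 := by
  have h1 := G.shortest_pos hsIJ ht hnadj
  constructor
  · rw [numShortest, h1, Set.ncard_singleton]
  · rw [numShortestThrough]
    have : {l : List V | IsShortestDirPath G.adj s t l ∧ ListInterior l G.v}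
        = {[s, G.v, t]} := by
      ext l
      constructor
      · rintro ⟨h, -⟩
        have hm : l ∈ {l : List V | IsShortestDirPath G.adj s t l} := h
        rw [h1] at hm
        exact hm
      · rintro rfl
        have hm : [s, G.v, t] ∈ ({[s, G.v, t]} : Set (List V)) := rfl
        rw [← h1] at hm
        exact ⟨hm, by simp [ListInterior]⟩
    rw [this, Set.ncard_singleton]

lemma through_zero_s16 {s t : V} (hs : s ≠ G.v) (ht : t ≠ G.v)
    (hneg : ¬(s ∈ G.I ∪ G.J ∧ t ∈ G.T ∧ ¬ G.adj s t)) :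
    numShortestThrough G.adj s t G.v = 0 := by
  rw [numShortestThrough]
  convert Set.ncard_empty (List V)
  ext l
  simp only [Set.mem_setOf_eq, Set.mem_empty_iff_false, iff_false, not_and]
  rintro ⟨hp, hmin⟩ hint
  rcases G.dirPath_cases hs hp with ⟨rfl, -⟩ | ⟨rfl, -⟩ | ⟨rfl, hsv, hvt⟩
  · simp [ListInterior] at hint
  · simp [ListInterior] at hint
  · have hnd := hp.2.2.2
    simp only [List.nodup_cons, List.mem_cons, List.mem_singleton] at hnd
    have hst : s ≠ t := fun h => hnd.1 (Or.inr (by simp [h]))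
    apply hneg
    refine ⟨?_, (G.v_out t).mp hvt, ?_⟩
    · rcases G.cover s with rfl | hI | hJ | hK | hT
      · exact absurd rfl hs
      · exact Finset.mem_union_left _ hI
      · exact Finset.mem_union_right _ hJ
      · exact absurd ((G.K_out s hK G.v) hsv) G.v_not_T
      · exact absurd hsv (G.T_out s hT G.v)
    · intro hadj
      have hpath2 : IsDirPath G.adj s t [s, t] := by
        refine ⟨by simp [List.Chain', List.isChain_pair, hadj], rfl, by simp, by simp [hst]⟩
      have := hmin [s, t] hpath2
      simp at this


open Classical in
lemma term_eq {s t : V} (hs : s ≠ G.v) (ht : t ≠ G.v) :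
    (numShortestThrough G.adj s t G.v : ℝ) / (numShortest G.adj s t : ℝ)
      = if s ∈ G.I ∪ G.J ∧ t ∈ G.T ∧ ¬ G.adj s t then 1 else 0 := by
  by_cases h : s ∈ G.I ∪ G.J ∧ t ∈ G.T ∧ ¬ G.adj s t
  · obtain ⟨e1, e2⟩ := G.term_pos h.1 h.2.1 h.2.2
    rw [if_pos h, e1, e2]
    norm_num
  · rw [if_neg h, G.through_zero_s16 hs ht h]
    simp

lemma sum_indicator [Fintype V] (A : Finset V) (hA : G.v ∉ A) :
    ∑ t ∈ univ.erase G.v, (if t ∈ A then (1 : ℝ) else 0) = A.card := by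
  rw [Finset.sum_boole]
  have h : (univ.erase G.v).filter (fun t => t ∈ A) = A := by
    ext x
    simp only [Finset.mem_filter, Finset.mem_erase, Finset.mem_univ, and_true, true_and]
    exact ⟨fun h => h.2, fun h => ⟨fun hv => hA (by rwa [hv] at h), h⟩⟩
  rw [h]

end CDGraph

/-- In a CD neighborhood graph with `degout(v) ≥ 1` and
`degin(v) ≥ 1`, if the normalized betweenness attains its maximal value,
`B(v)/(degout(v)·(degin(v) + n_K)) = 1`, then `K = ∅` and `J = ∅`, and consequently
the CD Index also attains its maximal value:
`D(v) = (n_I − n_J)/(n_I + n_J + n_K) = 1`. -/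
theorem cd_betweenness_max_implies_cd_max [Fintype V] [DecidableEq V] (G : CDGraph V)
    (h1 : 1 ≤ G.degout G.v) (h2 : 1 ≤ G.degin)
    (hmax : G.B / ((G.degout G.v : ℝ) * ((G.degin : ℝ) + (G.K.card : ℝ))) = 1) :
    G.K = ∅ ∧ G.J = ∅ ∧
    ((G.I.card : ℝ) - (G.J.card : ℝ))
        / ((G.I.card : ℝ) + (G.J.card : ℝ) + (G.K.card : ℝ)) = 1 := by
  classical
  -- degout v = |T|
  have hTset : {w | G.adj G.v w} = ↑G.T := by
    ext w; simp [G.v_out w]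
  have ha : G.degout G.v = G.T.card := by
    rw [CDGraph.degout, hTset, Set.ncard_coe_finset]
  have hT1 : 1 ≤ G.T.card := ha ▸ h1
  have hT1R : (1 : ℝ) ≤ (G.T.card : ℝ) := by exact_mod_cast hT1
  -- upper bound on B
  have hB : G.B ≤ (G.T.card : ℝ) * G.I.card + ((G.T.card : ℝ) - 1) * G.J.card := by
    rw [CDGraph.B]
    have key : ∀ s ∈ univ.erase G.v,
        (∑ t ∈ univ.erase G.v,
          (numShortestThrough G.adj s t G.v : ℝ) / (numShortest G.adj s t : ℝ))
        ≤ (G.T.card : ℝ) * (if s ∈ G.I then 1 else 0)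
            + ((G.T.card : ℝ) - 1) * (if s ∈ G.J then 1 else 0) := by
      intro s hsmem
      have hs : s ≠ G.v := (Finset.mem_erase.mp hsmem).1
      have hrw : ∀ t ∈ univ.erase G.v,
          (numShortestThrough G.adj s t G.v : ℝ) / (numShortest G.adj s t : ℝ)
          = if s ∈ G.I ∪ G.J ∧ t ∈ G.T ∧ ¬ G.adj s t then 1 else 0 :=
        fun t htm => G.term_eq hs (Finset.mem_erase.mp htm).1
      rw [Finset.sum_congr rfl hrw]
      by_cases hI : s ∈ G.I
      · have hJ : s ∉ G.J := fun h => (Finset.disjoint_left.mp G.disj_IJ hI) h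
        rw [if_pos hI, if_neg hJ, mul_one, mul_zero, add_zero]
        calc ∑ t ∈ univ.erase G.v,
              (if s ∈ G.I ∪ G.J ∧ t ∈ G.T ∧ ¬ G.adj s t then (1:ℝ) else 0)
            ≤ ∑ t ∈ univ.erase G.v, (if t ∈ G.T then (1:ℝ) else 0) := by
              apply Finset.sum_le_sum
              intro t _
              by_cases hc : s ∈ G.I ∪ G.J ∧ t ∈ G.T ∧ ¬ G.adj s t
              · rw [if_pos hc, if_pos hc.2.1]
              · rw [if_neg hc]
                split_ifs <;> norm_num
          _ = G.T.card := G.sum_indicator G.T G.v_not_T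
      · by_cases hJ : s ∈ G.J
        · rw [if_neg hI, if_pos hJ, mul_zero, zero_add, mul_one]
          obtain ⟨t₀, ht₀, hadj₀⟩ := G.J_cites_T s hJ
          calc ∑ t ∈ univ.erase G.v,
                (if s ∈ G.I ∪ G.J ∧ t ∈ G.T ∧ ¬ G.adj s t then (1:ℝ) else 0)
              ≤ ∑ t ∈ univ.erase G.v, (if t ∈ G.T.erase t₀ then (1:ℝ) else 0) := by
                apply Finset.sum_le_sum
                intro t _
                by_cases hc : s ∈ G.I ∪ G.J ∧ t ∈ G.T ∧ ¬ G.adj s t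
                · rw [if_pos hc, if_pos (Finset.mem_erase.mpr
                    ⟨fun h => hc.2.2 (by rw [h]; exact hadj₀), hc.2.1⟩)]
                · rw [if_neg hc]
                  split_ifs <;> norm_num
            _ = (G.T.erase t₀).card :=
                G.sum_indicator (G.T.erase t₀) (fun h => G.v_not_T (Finset.mem_erase.mp h).2)
            _ = (G.T.card : ℝ) - 1 := by
                rw [Finset.card_erase_of_mem ht₀, Nat.cast_sub hT1, Nat.cast_one]
        · rw [if_neg hI, if_neg hJ, mul_zero, mul_zero, add_zero]
          apply le_of_eq
          apply Finset.sum_eq_zero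
          intro t _
          rw [if_neg]
          rintro ⟨hsIJ, -⟩
          rcases Finset.mem_union.mp hsIJ with h | h
          · exact hI h
          · exact hJ h
    calc (∑ s ∈ univ.erase G.v, ∑ t ∈ univ.erase G.v,
            (numShortestThrough G.adj s t G.v : ℝ) / (numShortest G.adj s t : ℝ))
        ≤ ∑ s ∈ univ.erase G.v,
            ((G.T.card : ℝ) * (if s ∈ G.I then 1 else 0)
              + ((G.T.card : ℝ) - 1) * (if s ∈ G.J then 1 else 0)) :=
          Finset.sum_le_sum key
      _ = (G.T.card : ℝ) * G.I.card + ((G.T.card : ℝ) - 1) * G.J.card := by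
          rw [Finset.sum_add_distrib, ← Finset.mul_sum, ← Finset.mul_sum,
            G.sum_indicator G.I G.v_not_I, G.sum_indicator G.J G.v_not_J]
  -- from hmax: B equals the denominator
  have h2R : (1 : ℝ) ≤ (G.degin : ℝ) := by exact_mod_cast h2
  have hK0 : (0 : ℝ) ≤ (G.K.card : ℝ) := Nat.cast_nonneg _
  have hdne : ((G.degout G.v : ℝ) * ((G.degin : ℝ) + (G.K.card : ℝ))) ≠ 0 := by
    have h1R : (1 : ℝ) ≤ (G.degout G.v : ℝ) := by exact_mod_cast h1
    apply ne_of_gt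
    nlinarith
  have hBeq : G.B = (G.degout G.v : ℝ) * ((G.degin : ℝ) + (G.K.card : ℝ)) :=
    (div_eq_one_iff_eq hdne).mp hmax
  rw [ha] at hBeq
  have hdegin : (G.degin : ℝ) = (G.I.card : ℝ) + (G.J.card : ℝ) := by
    rw [CDGraph.degin]; push_cast; ring
  rw [hdegin] at hBeq
  have hJc : (G.J.card : ℝ) = 0 := by nlinarith [Nat.cast_nonneg (α := ℝ) G.J.card, Nat.cast_nonneg (α := ℝ) G.I.card]
  have hKc : (G.K.card : ℝ) = 0 := by nlinarith [Nat.cast_nonneg (α := ℝ) G.J.card, Nat.cast_nonneg (α := ℝ) G.I.card]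
  have hJe : G.J = ∅ := Finset.card_eq_zero.mp (by exact_mod_cast hJc)
  have hKe : G.K = ∅ := Finset.card_eq_zero.mp (by exact_mod_cast hKc)
  refine ⟨hKe, hJe, ?_⟩
  have hI1 : (1 : ℝ) ≤ (G.I.card : ℝ) := by
    rw [hdegin, hJc, add_zero] at h2R; exact h2R
  rw [hJc, hKc, sub_zero, add_zero, add_zero]
  exact div_self (by linarith)
end
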